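/- arXiv:1203.6648 — 4 statements merged into one kernel-verified Lean document; each statement's English description precedes it below -/
import Mathlib

section
/- Let p be an odd prime, a ≥ 2 an integer, and S an (n+1)×(n+1) integer matrix with |det S| = d odd, square-free, and divisible by p. If M is an (n+1)×(n+1) matrix over ℤ/p^a with Mᵀ S M = S in ℤ/p^a, then det M is a unit in ℤ/p^a; in particular M is invertible over ℤ/p^a. -/
open Matrix

/-- If `p` is an odd prime, `a ≥ 2`, and `S` is an integer matrix with `|det S| = d`
odd, square-free and divisible by `p`, then any `M` over `ℤ/p^a` with `Mᵀ S M = S`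
has unit determinant, hence is invertible. -/
theorem stmt3 (n p a d : ℕ) (hp : p.Prime) (hpodd : Odd p) (ha : 2 ≤ a)
    (S : Matrix (Fin (n + 1)) (Fin (n + 1)) ℤ)
    (hdet : S.det.natAbs = d) (hdodd : Odd d) (hsf : Squarefree d) (hpd : p ∣ d)
    (M : Matrix (Fin (n + 1)) (Fin (n + 1)) (ZMod (p ^ a)))
    (hM : Mᵀ * S.map (fun x => (x : ZMod (p ^ a))) * M = S.map (fun x => (x : ZMod (p ^ a)))) :
    IsUnit M.det ∧ IsUnit M := by
  have hpI : Prime (p : ℤ) := Nat.prime_iff_prime_int.mp hp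
  -- write d = p * m with p ∤ m
  obtain ⟨m, hm⟩ := hpd
  have hpm : ¬ p ∣ m := by
    intro ⟨c, hc⟩
    have : p * p ∣ d := ⟨c, by rw [hm, hc]; ring⟩
    exact hp.not_isUnit (hsf p this)
  -- determinant equation
  have hmapdet : (S.map (fun x => (x : ZMod (p ^ a)))).det = ((S.det : ℤ) : ZMod (p ^ a)) := by
    rw [show (S.map (fun x => (x : ZMod (p ^ a)))) =
        (Int.castRingHom (ZMod (p ^ a))).mapMatrix S from rfl, ← RingHom.map_det]
    rfl
  have hdeteq : M.det * M.det * ((S.det : ℤ) : ZMod (p ^ a)) = ((S.det : ℤ) : ZMod (p ^ a)) := by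
    have := congrArg Matrix.det hM
    rw [Matrix.det_mul, Matrix.det_mul, Matrix.det_transpose, hmapdet] at this
    rw [mul_right_comm] at this
    exact this
  -- lift det M to an integer k
  obtain ⟨k, hk⟩ := ZMod.intCast_surjective (n := p ^ a) M.det
  have hdvd : ((p : ℤ)) ^ a ∣ (k * k - 1) * S.det := by
    have : (((k * k - 1) * S.det : ℤ) : ZMod (p ^ a)) = 0 := by
      push_cast
      rw [hk]
      rw [sub_mul, one_mul, hmapdet, hdeteq, sub_self]
    have h2 := (ZMod.intCast_zmod_eq_zero_iff_dvd _ _).mp this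
    exact_mod_cast h2
  have hdvd2 : ((p : ℤ)) ^ a ∣ (k * k - 1) * (p * m) := by
    rcases Int.natAbs_eq S.det with h | h
    · rw [hdet] at h
      rw [h, hm] at hdvd
      exact_mod_cast hdvd
    · rw [hdet] at h
      rw [h, hm] at hdvd
      have : ((p : ℤ)) ^ a ∣ -((k * k - 1) * ((p : ℤ) * m)) := by
        convert hdvd using 1; push_cast; ring
      exact (dvd_neg.mp this)
  -- cancel one factor of p
  have hpm' : ¬ (p : ℤ) ∣ (m : ℤ) := by exact_mod_cast fun h => hpm (Int.ofNat_dvd.mp h)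
  have hdvd3 : ((p : ℤ)) ^ (a - 1) ∣ (k * k - 1) * m := by
    have hEq : ((p : ℤ)) ^ a = (p : ℤ) ^ (a - 1) * p := by
      rw [← pow_succ]
      congr 1
      omega
    have : (p : ℤ) ^ (a - 1) * p ∣ ((k * k - 1) * m) * p := by
      rw [← hEq]
      convert hdvd2 using 1; ring
    exact (mul_dvd_mul_iff_right (by exact_mod_cast hp.ne_zero : (p : ℤ) ≠ 0)).mp this
  have hcop : IsCoprime ((p : ℤ) ^ (a - 1)) (m : ℤ) :=
    ((hpI.coprime_iff_not_dvd.mpr hpm')).pow_left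
  have hdvd4 : ((p : ℤ)) ^ (a - 1) ∣ (k * k - 1) := hcop.dvd_of_dvd_mul_right hdvd3
  have hdvd5 : (p : ℤ) ∣ k * k - 1 :=
    dvd_trans (dvd_pow_self _ (by omega : a - 1 ≠ 0)) hdvd4
  -- p does not divide k
  have hpk : ¬ (p : ℤ) ∣ k := by
    intro h
    have : (p : ℤ) ∣ 1 := by
      have := dvd_sub (Dvd.dvd.mul_right h k) hdvd5
      simpa using this
    exact hpI.not_unit (isUnit_of_dvd_one this)
  -- hence det M is a unit
  have hcop2 : IsCoprime ((p : ℤ) ^ a) k := (hpI.coprime_iff_not_dvd.mpr hpk).pow_left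
  obtain ⟨u, v, huv⟩ := hcop2
  have hunit : IsUnit M.det := by
    refine IsUnit.of_mul_eq_one ((v : ℤ) : ZMod (p ^ a)) ?_
    have : ((u * p ^ a + v * k : ℤ) : ZMod (p ^ a)) = 1 := by rw [huv]; norm_cast
    have hz : (((p : ℤ) ^ a : ℤ) : ZMod (p ^ a)) = 0 := by
      push_cast
      exact_mod_cast ZMod.natCast_self (p ^ a)
    push_cast at this
    rw [show ((p : ZMod (p^a))) ^ a = 0 by rw [← Nat.cast_pow, ZMod.natCast_self]] at this
    rw [mul_zero, zero_add, hk, mul_comm] at this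
    exact this
  exact ⟨hunit, (Matrix.isUnit_iff_isUnit_det M).mpr hunit⟩
end

section
/- Let p be an odd prime and n an odd positive integer. Then the order of the orthogonal group O(n, ℤ/p) of n×n matrices A over the field with p elements satisfying Aᵀ A = I equals 2 · ∏_{k=1}^{n-1} (p^k - ε₂(k)), where ε₂(k) = 1 if k is even and 0 if k is odd. -/
open Matrix

namespace Stmt6Aux

open Finset

variable (p : ℕ) [Fact p.Prime]

section Counting

local notation "χ" => quadraticChar (ZMod p)

/-- integer-valued count of solutions of `∑ xᵢ² = c` in `k` variables. -/
noncomputable def cnt (k : ℕ) (c : ZMod p) : ℤ :=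
  ∑ v : Fin k → ZMod p, if ∑ i, v i ^ 2 = c then 1 else 0

lemma cnt_eq_card (k : ℕ) (c : ZMod p) :
    (Nat.card {v : Fin k → ZMod p // ∑ i, v i ^ 2 = c} : ℤ) = cnt p k c := by
  classical
  rw [Nat.card_eq_fintype_card, Fintype.card_subtype, cnt]
  push_cast [Finset.card_filter]
  rfl

lemma cnt_total (k : ℕ) : ∑ c : ZMod p, cnt p k c = (p : ℤ) ^ k := by
  classical
  simp only [cnt]
  rw [Finset.sum_comm]
  have : ∀ v : Fin k → ZMod p,
      (∑ c : ZMod p, if ∑ i, v i ^ 2 = c then (1:ℤ) else 0) = 1 := by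
    intro v; simp
  rw [Finset.sum_congr rfl fun v _ => this v]
  simp [Finset.card_univ, mul_comm]

lemma sum_sq_comp (k : ℕ) (f : ZMod p → ℤ) (hrc : ringChar (ZMod p) ≠ 2) :
    ∑ x : ZMod p, f (x ^ 2) = ∑ a : ZMod p, (χ a + 1) * f a := by
  classical
  rw [← Finset.sum_fiberwise univ (fun x : ZMod p => x ^ 2) (fun x => f (x ^ 2))]
  refine Finset.sum_congr rfl fun a _ => ?_
  rw [Finset.sum_congr rfl (fun x hx => by
    rw [(Finset.mem_filter.mp hx).2]), Finset.sum_const, nsmul_eq_mul]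
  congr 1
  have := quadraticChar_card_sqrts hrc a
  rw [← this]
  simp [Set.toFinset_setOf]

lemma cnt_succ (k : ℕ) (c : ZMod p) (hrc : ringChar (ZMod p) ≠ 2) :
    cnt p (k + 1) c = ∑ a : ZMod p, (χ a + 1) * cnt p k (c - a) := by
  classical
  rw [← sum_sq_comp p k (fun a => cnt p k (c - a)) hrc]
  rw [cnt, ← Equiv.sum_comp (Fin.consEquiv (fun _ : Fin (k+1) => ZMod p))
    (fun v : Fin k.succ → ZMod p =>
    if ∑ i, v i ^ 2 = c then (1:ℤ) else 0), Fintype.sum_prod_type]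
  refine Finset.sum_congr rfl fun x _ => ?_
  rw [cnt]
  refine Finset.sum_congr rfl fun w _ => ?_
  have hv : ∀ i, ((Fin.consEquiv (fun _ : Fin (k+1) => ZMod p)) (x, w)) i ^ 2
      = Fin.cons (α := fun _ => ZMod p) (x ^ 2) (fun i => w i ^ 2) i := by
    intro i
    refine Fin.cases ?_ (fun j => ?_) i <;>
      simp [Fin.consEquiv]
  rw [Fintype.sum_congr _ _ hv, Fin.sum_univ_succ]
  simp only [Fin.cons_zero, Fin.cons_succ]
  congr 1
  rw [eq_iff_iff]
  constructor <;> intro h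
  · rw [← h]; ring
  · rw [h]; ring

lemma sum_chi_sq (hrc : ringChar (ZMod p) ≠ 2) :
    ∑ a : ZMod p, χ a * χ a = (p : ℤ) - 1 := by
  classical
  have h : ∀ a : ZMod p, χ a * χ a = if a = 0 then 0 else 1 := by
    intro a
    by_cases ha : a = 0
    · simp [ha]
    · rw [← sq, quadraticChar_sq_one ha]; simp [ha]
  rw [Finset.sum_congr rfl fun a _ => h a]
  rw [Finset.sum_ite, Finset.sum_const, Finset.sum_const]
  simp [Finset.filter_eq', Finset.filter_ne', ZMod.card]
  have : 1 ≤ p := (Fact.out : p.Prime).one_lt.le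
  push_cast [this]
  ring

lemma sum_chi_mul_chi (c : ZMod p) (hrc : ringChar (ZMod p) ≠ 2) :
    ∑ a : ZMod p, χ a * χ (c - a) =
      if c = 0 then χ (-1) * ((p : ℤ) - 1) else -χ (-1) := by
  classical
  by_cases hc : c = 0
  · subst hc
    rw [if_pos rfl]
    have h : ∀ a : ZMod p, χ a * χ (0 - a) = χ (-1) * (χ a * χ a) := by
      intro a
      rw [zero_sub, show (-a : ZMod p) = -1 * a by ring, _root_.map_mul]
      ring
    rw [Finset.sum_congr rfl fun a _ => h a, ← Finset.mul_sum, sum_chi_sq p hrc]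
  · rw [if_neg hc]
    have key : ∑ a : ZMod p, χ a * χ (c - a) = jacobiSum χ χ := by
      rw [jacobiSum, ← Equiv.sum_comp (Equiv.mulLeft₀ c hc)
        (fun a => χ a * χ (c - a))]
      refine Finset.sum_congr rfl fun x _ => ?_
      have h1 : (Equiv.mulLeft₀ c hc) x = c * x := rfl
      rw [h1, show c - c * x = c * (1 - x) by ring, _root_.map_mul, _root_.map_mul]
      have hc2 : χ c * χ c = 1 := by
        rw [← sq]; exact quadraticChar_sq_one hc
      ring_nf
      rw [show χ c ^ 2 = 1 by rw [sq]; exact hc2]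
      ring
    rw [key, show jacobiSum χ χ = jacobiSum χ χ⁻¹ by
      rw [(quadraticChar_isQuadratic (ZMod p)).inv]]
    exact jacobiSum_nontrivial_inv (quadraticChar_ne_one hrc)

lemma cnt_zero (b : ZMod p) : cnt p 0 b = if b = 0 then 1 else 0 := by
  classical
  rw [cnt, Finset.sum_eq_single (fun i : Fin 0 => 0)]
  · simp [eq_comm]
  · intro v _ hv; exact absurd (funext fun i => i.elim0) hv
  · intro h; exact absurd (Finset.mem_univ _) h

lemma sum_cnt_sub (k : ℕ) (c : ZMod p) :
    ∑ a : ZMod p, cnt p k (c - a) = (p : ℤ) ^ k := by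
  have h := Equiv.sum_comp (Equiv.subLeft c) (cnt p k)
  simp only [Equiv.subLeft_apply] at h
  rw [h]; exact cnt_total p k

lemma cnt_odd (hrc : ringChar (ZMod p) ≠ 2) (j : ℕ) (c : ZMod p) :
    cnt p (2 * j + 1) c = (p : ℤ) ^ (2 * j) + χ (-1) ^ j * (p : ℤ) ^ j * χ c := by
  classical
  induction j generalizing c with
  | zero =>
    rw [cnt_succ p 0 c hrc]
    have : ∀ a : ZMod p, (χ a + 1) * cnt p 0 (c - a)
        = if a = c then χ a + 1 else 0 := by
      intro a
      rw [cnt_zero]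
      rcases eq_or_ne a c with h | h
      · simp [h]
      · simp [sub_eq_zero, h, Ne.symm h]
    rw [Finset.sum_congr rfl fun a _ => this a, Finset.sum_ite_eq' univ c]
    simp [add_comm]
  | succ j ih =>
    -- even step
    have heven : ∀ d : ZMod p, cnt p (2 * j + 2) d =
        (p : ℤ) ^ (2 * j + 1) - χ (-1) ^ (j + 1) * (p : ℤ) ^ j
          + (if d = 0 then χ (-1) ^ (j + 1) * (p : ℤ) ^ (j + 1) else 0) := by
      intro d
      have h1 : cnt p (2 * j + 2) d = ∑ a : ZMod p, (χ a + 1) * cnt p (2 * j + 1) (d - a) :=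
        cnt_succ p (2 * j + 1) d hrc
      rw [h1]
      simp only [mul_add, add_mul, one_mul]
      rw [Finset.sum_add_distrib, sum_cnt_sub]
      have h2 : ∑ a : ZMod p, χ a * cnt p (2 * j + 1) (d - a)
          = χ (-1) ^ j * (p : ℤ) ^ j * (if d = 0 then χ (-1) * ((p : ℤ) - 1) else -χ (-1)) := by
        rw [Finset.sum_congr rfl fun a _ => by rw [ih (d - a)]]
        simp only [mul_add]
        rw [Finset.sum_add_distrib, ← Finset.sum_mul, quadraticChar_sum_zero hrc]
        have : ∀ a : ZMod p, χ a * (χ (-1) ^ j * (p:ℤ) ^ j * χ (d - a))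
            = χ (-1) ^ j * (p:ℤ) ^ j * (χ a * χ (d - a)) := fun a => by ring
        rw [Finset.sum_congr rfl fun a _ => this a, ← Finset.mul_sum,
          sum_chi_mul_chi p d hrc]
        simp
      rw [h2]
      rcases eq_or_ne d 0 with h | h <;> simp only [h, if_pos, if_neg, ne_eq, not_false_iff] <;>
        push_cast <;> ring_nf <;> simp [h] <;> ring
    -- odd step
    have h1 : cnt p (2 * (j+1) + 1) c = ∑ a : ZMod p, (χ a + 1) * cnt p (2 * j + 2) (c - a) := by
      have : 2 * (j + 1) + 1 = (2 * j + 2) + 1 := by ring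
      rw [this]; exact cnt_succ p (2 * j + 2) c hrc
    rw [h1]
    have expand : ∀ a : ZMod p, (χ a + 1) * cnt p (2 * j + 2) (c - a)
        = χ a * ((p:ℤ)^(2*j+1) - χ (-1)^(j+1) * (p:ℤ)^j)
          + ((p:ℤ)^(2*j+1) - χ (-1)^(j+1) * (p:ℤ)^j)
          + (if a = c then (χ a + 1) * (χ (-1)^(j+1) * (p:ℤ)^(j+1)) else 0) := by
      intro a
      rw [heven (c - a)]
      rcases eq_or_ne a c with h | h
      · rw [if_pos (by simp [h]), if_pos h]; ring
      · rw [if_neg (by simpa [sub_eq_zero] using Ne.symm h), if_neg h]; ring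
    rw [Finset.sum_congr rfl fun a _ => expand a]
    rw [Finset.sum_add_distrib, Finset.sum_add_distrib, ← Finset.sum_mul,
      quadraticChar_sum_zero hrc, Finset.sum_const, Finset.sum_ite_eq' univ c,
      if_pos (Finset.mem_univ c)]
    simp only [Finset.card_univ, ZMod.card, zero_mul, nsmul_eq_mul, zero_add]
    push_cast
    ring

lemma cnt_even (hrc : ringChar (ZMod p) ≠ 2) (j : ℕ) (d : ZMod p) :
    cnt p (2 * j + 2) d =
      (p : ℤ) ^ (2 * j + 1) - χ (-1) ^ (j + 1) * (p : ℤ) ^ j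
        + (if d = 0 then χ (-1) ^ (j + 1) * (p : ℤ) ^ (j + 1) else 0) := by
  classical
  have ih := cnt_odd p hrc j
  have h1 : cnt p (2 * j + 2) d = ∑ a : ZMod p, (χ a + 1) * cnt p (2 * j + 1) (d - a) :=
    cnt_succ p (2 * j + 1) d hrc
  rw [h1]
  simp only [mul_add, add_mul, one_mul]
  rw [Finset.sum_add_distrib, sum_cnt_sub]
  have h2 : ∑ a : ZMod p, χ a * cnt p (2 * j + 1) (d - a)
      = χ (-1) ^ j * (p : ℤ) ^ j * (if d = 0 then χ (-1) * ((p : ℤ) - 1) else -χ (-1)) := by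
    rw [Finset.sum_congr rfl fun a _ => by rw [ih (d - a)]]
    simp only [mul_add]
    rw [Finset.sum_add_distrib, ← Finset.sum_mul, quadraticChar_sum_zero hrc]
    have : ∀ a : ZMod p, χ a * (χ (-1) ^ j * (p:ℤ) ^ j * χ (d - a))
        = χ (-1) ^ j * (p:ℤ) ^ j * (χ a * χ (d - a)) := fun a => by ring
    rw [Finset.sum_congr rfl fun a _ => this a, ← Finset.mul_sum,
      sum_chi_mul_chi p d hrc]
    simp
  rw [h2]
  rcases eq_or_ne d 0 with h | h <;> simp only [h, if_pos, if_neg, ne_eq, not_false_iff] <;>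
    ring_nf <;> simp [h] <;> ring

lemma sphere_odd (hrc : ringChar (ZMod p) ≠ 2) (j : ℕ) :
    (Nat.card {v : Fin (2 * j + 1) → ZMod p // ∑ i, v i ^ 2 = 1} : ℤ)
      = (p : ℤ) ^ (2 * j) + χ (-1) ^ j * (p : ℤ) ^ j := by
  rw [cnt_eq_card, cnt_odd p hrc j 1, _root_.map_one]
  ring

lemma sphere_even (hrc : ringChar (ZMod p) ≠ 2) (j : ℕ) :
    (Nat.card {v : Fin (2 * j + 2) → ZMod p // ∑ i, v i ^ 2 = 1} : ℤ)
      = (p : ℤ) ^ (2 * j + 1) - χ (-1) ^ (j + 1) * (p : ℤ) ^ j := by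
  rw [cnt_eq_card, cnt_even p hrc j 1, if_neg (one_ne_zero), add_zero]

end Counting

section MatrixPart


variable {K : Type*} [Field K]

/-- Reflection in the vector `z`. -/
noncomputable def refl (z : Fin m → K) : Matrix (Fin m) (Fin m) K :=
  1 - (2 * (z ⬝ᵥ z)⁻¹) • vecMulVec z z

lemma vecMulVec_mulVec (z w u : Fin m → K) :
    vecMulVec z w *ᵥ u = (w ⬝ᵥ u) • z := by
  funext i
  simp only [mulVec, vecMulVec_apply, dotProduct, Pi.smul_apply, smul_eq_mul]
  rw [Finset.sum_mul]
  exact Finset.sum_congr rfl fun j _ => by ring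

lemma refl_transpose (z : Fin m → K) : (refl z)ᵀ = refl z := by
  rw [refl, transpose_sub, transpose_smul, transpose_one]
  congr 1
  funext i j
  simp [vecMulVec_apply, mul_comm]

lemma refl_mul_self (z : Fin m → K) (hz : z ⬝ᵥ z ≠ 0) : refl z * refl z = 1 := by
  have hvv : vecMulVec z z * vecMulVec z z = (z ⬝ᵥ z) • vecMulVec z z := by
    funext i j
    simp only [mul_apply, vecMulVec_apply, Matrix.smul_apply, smul_eq_mul, dotProduct]
    rw [Finset.sum_mul]
    exact Finset.sum_congr rfl fun k _ => by ring
  have key : ((2 * (z ⬝ᵥ z)⁻¹) • vecMulVec z z) * ((2 * (z ⬝ᵥ z)⁻¹) • vecMulVec z z)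
      = (2 * (2 * (z ⬝ᵥ z)⁻¹)) • vecMulVec z z := by
    rw [smul_mul_assoc, mul_smul_comm, hvv, smul_smul, smul_smul]
    congr 1
    field_simp
  rw [refl, sub_mul, mul_sub, mul_sub, one_mul, one_mul, mul_one, key]
  module

lemma refl_orth (z : Fin m → K) (hz : z ⬝ᵥ z ≠ 0) : (refl z)ᵀ * refl z = 1 := by
  rw [refl_transpose]; exact refl_mul_self z hz

lemma refl_mulVec (z u : Fin m → K) :
    refl z *ᵥ u = u - (2 * (z ⬝ᵥ z)⁻¹ * (z ⬝ᵥ u)) • z := by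
  rw [refl, sub_mulVec, one_mulVec, smul_mulVec, vecMulVec_mulVec, smul_smul]

lemma sum_sq_eq_dot (v : Fin m → K) : ∑ i, v i ^ 2 = v ⬝ᵥ v := by
  exact Finset.sum_congr rfl fun i _ => sq (v i)

lemma orth_mul {A B : Matrix (Fin m) (Fin m) K} (hA : Aᵀ * A = 1) (hB : Bᵀ * B = 1) :
    (A * B)ᵀ * (A * B) = 1 := by
  rw [transpose_mul, mul_assoc, ← mul_assoc Aᵀ, hA, one_mul, hB]

lemma exists_orth (h2 : (2 : K) ≠ 0) {n : ℕ} (v : Fin (n + 1) → K)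
    (hv : ∑ i, v i ^ 2 = 1) :
    ∃ A : Matrix (Fin (n + 1)) (Fin (n + 1)) K,
      Aᵀ * A = 1 ∧ A *ᵥ Pi.single (Fin.last n) 1 = v := by
  classical
  set e : Fin (n + 1) → K := Pi.single (Fin.last n) 1 with he
  have hee : e ⬝ᵥ e = 1 := by simp [he, dotProduct_single]
  have hvv : v ⬝ᵥ v = 1 := by rw [← sum_sq_eq_dot]; exact hv
  set b : K := e ⬝ᵥ v with hb
  have hz1 : (e - v) ⬝ᵥ (e - v) = 2 * (1 - b) := by
    rw [sub_dotProduct, dotProduct_sub, dotProduct_sub, hee, hvv, dotProduct_comm v e, ← hb]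
    ring
  have hz2 : (e + v) ⬝ᵥ (e + v) = 2 * (1 + b) := by
    rw [add_dotProduct, dotProduct_add, dotProduct_add, hee, hvv, dotProduct_comm v e, ← hb]
    ring
  by_cases h : (e - v) ⬝ᵥ (e - v) ≠ 0
  · refine ⟨refl (e - v), refl_orth _ h, ?_⟩
    rw [refl_mulVec]
    have hze : (e - v) ⬝ᵥ e = 1 - b := by
      rw [sub_dotProduct, hee, dotProduct_comm v e, ← hb]
    rw [hze, hz1]
    have h1b : (1 : K) - b ≠ 0 := by
      intro h0; rw [hz1, h0, mul_zero] at h; exact h rfl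
    have : 2 * (2 * (1 - b))⁻¹ * (1 - b) = 1 := by field_simp
    rw [this, one_smul]
    abel
  · push_neg at h
    have h1b : (1 : K) + b ≠ 0 := by
      intro h0
      have h4 : (2:K) * (1 - b) + 2 * (1 + b) = 4 := by ring
      rw [h0, mul_zero, add_zero, ← hz1] at h4
      rw [h] at h4
      have : (4 : K) = 2 * 2 := by norm_num
      rw [this] at h4
      exact (mul_ne_zero h2 h2) h4.symm
    have hz2' : (e + v) ⬝ᵥ (e + v) ≠ 0 := by rw [hz2]; exact mul_ne_zero h2 h1b
    have hvv' : v ⬝ᵥ v ≠ 0 := by rw [hvv]; exact one_ne_zero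
    refine ⟨refl v * refl (e + v), orth_mul (refl_orth _ hvv') (refl_orth _ hz2'), ?_⟩
    have hze : (e + v) ⬝ᵥ e = 1 + b := by
      rw [add_dotProduct, hee, dotProduct_comm v e, ← hb]
    have hinner : refl (e + v) *ᵥ e = -v := by
      rw [refl_mulVec, hze, hz2]
      have : 2 * (2 * (1 + b))⁻¹ * (1 + b) = 1 := by field_simp
      rw [this, one_smul]
      abel
    rw [← mulVec_mulVec, hinner, refl_mulVec, hvv, dotProduct_neg, hvv]
    funext i
    simp only [Pi.sub_apply, Pi.neg_apply, Pi.smul_apply, smul_eq_mul]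
    ring

variable {m : ℕ}

/-- embed an `m × m` matrix as a block matrix with a `1` in the corner. -/
def grow (C : Matrix (Fin m) (Fin m) K) : Matrix (Fin (m + 1)) (Fin (m + 1)) K :=
  (fromBlocks C 0 0 (1 : Matrix (Fin 1) (Fin 1) K)).submatrix
    finSumFinEquiv.symm finSumFinEquiv.symm

def shrink (B : Matrix (Fin (m + 1)) (Fin (m + 1)) K) : Matrix (Fin m) (Fin m) K :=
  B.submatrix Fin.castSucc Fin.castSucc

lemma grow_transpose (C : Matrix (Fin m) (Fin m) K) : (grow C)ᵀ = grow Cᵀ := by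
  rw [grow, transpose_submatrix, fromBlocks_transpose, transpose_zero, transpose_zero,
    transpose_one, grow]

lemma grow_mul (C D : Matrix (Fin m) (Fin m) K) : grow C * grow D = grow (C * D) := by
  rw [grow, grow, submatrix_mul_equiv, fromBlocks_multiply]
  simp [grow]

lemma grow_one : grow (1 : Matrix (Fin m) (Fin m) K) = 1 := by
  rw [grow, fromBlocks_one, submatrix_one_equiv]

lemma shrink_grow (C : Matrix (Fin m) (Fin m) K) : shrink (grow C) = C := by
  funext i j
  simp [shrink, grow, Fin.castSucc, finSumFinEquiv_symm_apply_castAdd]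

lemma grow_apply_castSucc (C : Matrix (Fin m) (Fin m) K) (i j : Fin m) :
    grow C i.castSucc j.castSucc = C i j := by
  simp [grow, Fin.castSucc, finSumFinEquiv_symm_apply_castAdd]

lemma grow_col_last (C : Matrix (Fin m) (Fin m) K) (i : Fin (m + 1)) :
    grow C i (Fin.last m) = (Pi.single (Fin.last m) 1 : Fin (m+1) → K) i := by
  refine Fin.lastCases ?_ (fun k => ?_) i
  · simp [grow, finSumFinEquiv_symm_last]
  · rw [show (Fin.castSucc k) = Fin.castAdd 1 k from rfl,
      Pi.single_eq_of_ne (by exact (Fin.castSucc_lt_last k).ne)]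
    simp [grow, finSumFinEquiv_symm_apply_castAdd]

lemma grow_row_last (C : Matrix (Fin m) (Fin m) K) (j : Fin (m + 1)) :
    grow C (Fin.last m) j = (Pi.single (Fin.last m) 1 : Fin (m+1) → K) j := by
  have := grow_col_last Cᵀ j
  rw [← grow_transpose] at this
  exact this

lemma grow_mulVec_single (C : Matrix (Fin m) (Fin m) K) :
    grow C *ᵥ (Pi.single (Fin.last m) 1 : Fin (m+1) → K) = Pi.single (Fin.last m) 1 := by
  funext i
  rw [mulVec_single]
  simp only [Pi.smul_apply, op_smul_eq_mul, col_apply]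
  rw [grow_col_last]
  exact mul_one _

lemma orth_transpose {A : Matrix (Fin m) (Fin m) K} (hA : Aᵀ * A = 1) : A * Aᵀ = 1 :=
  mul_eq_one_comm.mp hA

lemma orth_dot {A : Matrix (Fin m) (Fin m) K} (hA : Aᵀ * A = 1) (x y : Fin m → K) :
    (A *ᵥ x) ⬝ᵥ (A *ᵥ y) = x ⬝ᵥ y := by
  rw [dotProduct_mulVec, ← vecMul_transpose, vecMul_vecMul, hA, vecMul_one]

/-- A matrix fixing the last basis vector (and orthogonal) is a `grow`. -/
lemma eq_grow_shrink {B : Matrix (Fin (m + 1)) (Fin (m + 1)) K} (hB : Bᵀ * B = 1)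
    (hcol : B *ᵥ (Pi.single (Fin.last m) 1 : Fin (m+1) → K) = Pi.single (Fin.last m) 1) :
    B = grow (shrink B) := by
  have hcol' : ∀ i, B i (Fin.last m) = (Pi.single (Fin.last m) 1 : Fin (m+1) → K) i := by
    intro i
    have := congrFun hcol i
    rw [mulVec_single] at this
    simpa using this
  have hrow : ∀ j, B (Fin.last m) j = (Pi.single (Fin.last m) 1 : Fin (m+1) → K) j := by
    intro j
    have h1 := congrFun (congrFun hB (Fin.last m)) j
    rw [mul_apply] at h1
    have h2 : ∀ k, Bᵀ (Fin.last m) k * B k j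
        = (Pi.single (Fin.last m) 1 : Fin (m+1) → K) k * B k j := by
      intro k
      rw [transpose_apply, hcol' k]
    rw [Finset.sum_congr rfl fun k _ => h2 k] at h1
    simp only [Pi.single_apply, ite_mul, one_mul, zero_mul, Finset.sum_ite_eq',
      Finset.mem_univ, if_true] at h1
    rw [h1, one_apply, Pi.single_apply]
    simp [eq_comm]
  funext i j
  refine Fin.lastCases ?_ (fun k => ?_) i
  · rw [hrow j, grow_row_last]
  · refine Fin.lastCases ?_ (fun l => ?_) j
    · rw [hcol' _, grow_col_last]
    · rw [grow_apply_castSucc]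
      rfl

lemma sphere_of_orth {n : ℕ} {A : Matrix (Fin (n+1)) (Fin (n+1)) K} (hA : Aᵀ * A = 1) :
    ∑ i, (A *ᵥ (Pi.single (Fin.last n) 1 : Fin (n+1) → K)) i ^ 2 = 1 := by
  rw [sum_sq_eq_dot, orth_dot hA]
  simp [dotProduct_single]

variable (K) in
/-- A choice of orthogonal matrix with prescribed last column. -/
noncomputable def pick (h2 : (2:K) ≠ 0) {n : ℕ} (v : Fin (n + 1) → K) :
    Matrix (Fin (n + 1)) (Fin (n + 1)) K :=
  letI := Classical.dec (∑ i, v i ^ 2 = 1)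
  if hv : ∑ i, v i ^ 2 = 1 then Classical.choose (exists_orth h2 v hv) else 1

lemma pick_spec (h2 : (2:K) ≠ 0) {n : ℕ} (v : Fin (n + 1) → K) (hv : ∑ i, v i ^ 2 = 1) :
    (pick K h2 v)ᵀ * pick K h2 v = 1 ∧
      pick K h2 v *ᵥ (Pi.single (Fin.last n) 1 : Fin (n+1) → K) = v := by
  unfold pick
  rw [dif_pos hv]
  exact Classical.choose_spec (exists_orth h2 v hv)

lemma pick_fix (h2 : (2:K) ≠ 0) {n : ℕ} {A : Matrix (Fin (n+1)) (Fin (n+1)) K}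
    (hA : Aᵀ * A = 1) {w : Fin (n + 1) → K} (hw : A *ᵥ Pi.single (Fin.last n) 1 = w) :
    ((pick K h2 w)ᵀ * A) *ᵥ (Pi.single (Fin.last n) 1 : Fin (n+1) → K)
      = Pi.single (Fin.last n) 1 := by
  have hv : ∑ i, w i ^ 2 = 1 := hw ▸ sphere_of_orth hA
  obtain ⟨hp1, hp2⟩ := pick_spec h2 _ hv
  rw [← mulVec_mulVec, hw,
    show (pick K h2 w)ᵀ *ᵥ w
        = (pick K h2 w)ᵀ *ᵥ (pick K h2 w *ᵥ Pi.single (Fin.last n) 1) from by rw [hp2],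
    mulVec_mulVec, hp1, one_mulVec]

lemma orth_shrink {B : Matrix (Fin (m + 1)) (Fin (m + 1)) K} (hB : Bᵀ * B = 1)
    (hfix : B *ᵥ (Pi.single (Fin.last m) 1 : Fin (m+1) → K) = Pi.single (Fin.last m) 1) :
    (shrink B)ᵀ * shrink B = 1 := by
  have h : grow ((shrink B)ᵀ * shrink B) = grow 1 := by
    rw [← grow_mul, ← grow_transpose, ← eq_grow_shrink hB hfix, hB, grow_one]
  have h2 := congrArg shrink h
  rwa [shrink_grow, shrink_grow] at h2

lemma orth_grow {C : Matrix (Fin m) (Fin m) K} (hC : Cᵀ * C = 1) :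
    (grow C)ᵀ * grow C = 1 := by
  rw [grow_transpose, grow_mul, hC, grow_one]

/-- The structure equivalence `O(n+1) ≃ S^n × O(n)`. -/
noncomputable def stepEquiv (h2 : (2:K) ≠ 0) (n : ℕ) :
    {A : Matrix (Fin (n + 1)) (Fin (n + 1)) K // Aᵀ * A = 1}
      ≃ {v : Fin (n + 1) → K // ∑ i, v i ^ 2 = 1}
        × {A : Matrix (Fin n) (Fin n) K // Aᵀ * A = 1} where
  toFun A :=
    (⟨A.1 *ᵥ Pi.single (Fin.last n) 1, sphere_of_orth A.2⟩,
     ⟨shrink ((pick K h2 (A.1 *ᵥ Pi.single (Fin.last n) 1))ᵀ * A.1), by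
      have hv := sphere_of_orth A.2
      obtain ⟨hp1, hp2⟩ := pick_spec h2 _ hv
      refine orth_shrink (orth_mul ?_ A.2) (pick_fix h2 A.2 rfl)
      rw [transpose_transpose]; exact orth_transpose hp1⟩)
  invFun vC :=
    ⟨pick K h2 vC.1.1 * grow vC.2.1,
      orth_mul (pick_spec h2 _ vC.1.2).1 (orth_grow vC.2.2)⟩
  left_inv A := by
    obtain ⟨A, hA⟩ := A
    apply Subtype.ext
    simp only []
    have hv := sphere_of_orth hA
    obtain ⟨hp1, hp2⟩ := pick_spec h2 _ hv
    have hBorth : ((pick K h2 (A *ᵥ Pi.single (Fin.last n) 1))ᵀ * A)ᵀ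
        * ((pick K h2 (A *ᵥ Pi.single (Fin.last n) 1))ᵀ * A) = 1 := by
      refine orth_mul ?_ hA
      rw [transpose_transpose]; exact orth_transpose hp1
    have hBfix : ((pick K h2 (A *ᵥ Pi.single (Fin.last n) 1))ᵀ * A) *ᵥ
        (Pi.single (Fin.last n) 1 : Fin (n+1) → K) = Pi.single (Fin.last n) 1 :=
      pick_fix h2 hA rfl
    rw [← eq_grow_shrink hBorth hBfix, ← mul_assoc, orth_transpose hp1, one_mul]
  right_inv vC := by
    obtain ⟨⟨v, hv⟩, ⟨C, hC⟩⟩ := vC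
    obtain ⟨hp1, hp2⟩ := pick_spec h2 _ hv
    have hcol : (pick K h2 v * grow C) *ᵥ (Pi.single (Fin.last n) 1 : Fin (n+1) → K) = v := by
      rw [← mulVec_mulVec, grow_mulVec_single, hp2]
    refine Prod.ext (Subtype.ext ?_) (Subtype.ext ?_) <;> simp only [hcol]
    rw [← mul_assoc, hp1, one_mul, shrink_grow]

lemma card_step (h2 : (2:K) ≠ 0) (n : ℕ) :
    Nat.card {A : Matrix (Fin (n + 1)) (Fin (n + 1)) K // Aᵀ * A = 1}
      = Nat.card {v : Fin (n + 1) → K // ∑ i, v i ^ 2 = 1}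
        * Nat.card {A : Matrix (Fin n) (Fin n) K // Aᵀ * A = 1} := by
  rw [Nat.card_congr (stepEquiv h2 n), Nat.card_prod]

end MatrixPart


lemma card_matrix_zero {K : Type*} [Field K] :
    Nat.card {A : Matrix (Fin 0) (Fin 0) K // Aᵀ * A = 1} = 1 := by
  haveI : Unique {A : Matrix (Fin 0) (Fin 0) K // Aᵀ * A = 1} :=
    ⟨⟨⟨1, by funext i j; exact i.elim0⟩⟩,
      fun a => Subtype.ext (by funext i j; exact i.elim0)⟩
  exact Nat.card_unique

/-- order of the orthogonal group -/
noncomputable def On (k : ℕ) : ℕ :=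
  Nat.card {A : Matrix (Fin k) (Fin k) (ZMod p) // Aᵀ * A = 1}

/-- number of points on the unit sphere -/
noncomputable def Sph (k : ℕ) : ℕ :=
  Nat.card {v : Fin k → ZMod p // ∑ i, v i ^ 2 = 1}

lemma On_succ (h2 : (2 : ZMod p) ≠ 0) (n : ℕ) : On p (n + 1) = Sph p (n + 1) * On p n :=
  card_step h2 n

lemma main_int (hp2 : p ≠ 2) (j : ℕ) :
    (On p (2 * j + 1) : ℤ)
      = 2 * ∏ k ∈ Finset.Icc 1 (2 * j), ((p : ℤ) ^ k - if Even k then 1 else 0) := by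
  have hrc : ringChar (ZMod p) ≠ 2 := by rw [ZMod.ringChar_zmod_n]; exact hp2
  have h2 : (2 : ZMod p) ≠ 0 := by
    intro h
    have hd : p ∣ 2 := by
      rw [← ZMod.natCast_eq_zero_iff]
      exact_mod_cast h
    exact hp2 ((Nat.prime_dvd_prime_iff_eq Fact.out Nat.prime_two).mp hd)
  have hε : (quadraticChar (ZMod p)) (-1) ^ 2 = 1 :=
    quadraticChar_sq_one (neg_ne_zero.mpr one_ne_zero)
  induction j with
  | zero =>
    have h1 : On p 1 = Sph p 1 * On p 0 := On_succ p h2 0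
    have h0 : On p 0 = 1 := card_matrix_zero
    have hs : (Sph p 1 : ℤ) = (p : ℤ) ^ (2 * 0) + (quadraticChar (ZMod p)) (-1) ^ 0 * (p:ℤ) ^ 0 :=
      sphere_odd p hrc 0
    simp only [pow_zero, one_mul, mul_zero] at hs
    show (On p 1 : ℤ) = _
    rw [show (2 * 0 : ℕ) = 0 from rfl, Finset.Icc_eq_empty (by omega), Finset.prod_empty,
      mul_one, h1, h0, mul_one]
    push_cast
    rw [hs]
    norm_num
  | succ j ih =>
    have h1 : On p (2 * j + 3) = Sph p (2 * j + 3) * On p (2 * j + 2) := On_succ p h2 (2 * j + 2)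
    have h2' : On p (2 * j + 2) = Sph p (2 * j + 2) * On p (2 * j + 1) := On_succ p h2 (2 * j + 1)
    have o1 : (Sph p (2 * j + 3) : ℤ)
        = (p : ℤ) ^ (2 * (j+1)) + (quadraticChar (ZMod p)) (-1) ^ (j+1) * (p : ℤ) ^ (j+1) :=
      sphere_odd p hrc (j + 1)
    have o2 : (Sph p (2 * j + 2) : ℤ)
        = (p : ℤ) ^ (2 * j + 1) - (quadraticChar (ZMod p)) (-1) ^ (j+1) * (p : ℤ) ^ j :=
      sphere_even p hrc j
    have key : (On p (2 * j + 3) : ℤ)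
        = ((p:ℤ) ^ (2*j+1) - 0) * ((p:ℤ) ^ (2*j+2) - 1) * (On p (2 * j + 1) : ℤ) := by
      rw [h1, h2']
      push_cast
      rw [o1, o2]
      have ha : (quadraticChar (ZMod p)) (-1) ^ (j+1) * (quadraticChar (ZMod p)) (-1) ^ (j+1)
          = 1 := by
        rw [show (quadraticChar (ZMod p)) (-1) ^ (j+1) * (quadraticChar (ZMod p)) (-1) ^ (j+1)
            = ((quadraticChar (ZMod p)) (-1) ^ 2) ^ (j+1) by ring, hε, one_pow]
      linear_combination (-((p:ℤ) ^ (2*j+1)) * (On p (2*j+1) : ℤ)) * ha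
    have hgoal : On p (2 * (j+1) + 1) = On p (2 * j + 3) := rfl
    rw [hgoal, key, ih]
    rw [show (2 * (j + 1) : ℕ) = (2 * j + 1) + 1 by ring,
      Finset.prod_Icc_succ_top (by omega : 1 ≤ 2 * j + 1 + 1),
      Finset.prod_Icc_succ_top (by omega : 1 ≤ 2 * j + 1)]
    have he1 : ¬ Even (2 * j + 1) := by simp [Nat.even_add_one, Nat.even_mul]
    have he2 : Even (2 * j + 1 + 1) := by refine ⟨j + 1, by ring⟩
    rw [if_neg he1, if_pos he2]
    ring

end Stmt6Aux

open Stmt6Aux in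
/-- For an odd prime `p` and odd positive `n`,
`|O(n, ℤ/p)| = 2 · ∏_{k=1}^{n-1} (p^k - ε₂(k))`. -/
theorem stmt6 (p n : ℕ) (hp : p.Prime) (hpodd : Odd p) (hn : Odd n) (h1 : 0 < n) :
    Nat.card {A : Matrix (Fin n) (Fin n) (ZMod p) // Aᵀ * A = 1} =
      2 * ∏ k ∈ Finset.Icc 1 (n - 1), (p ^ k - if Even k then 1 else 0) := by
  haveI : Fact p.Prime := ⟨hp⟩
  have hp2 : p ≠ 2 := by rintro rfl; exact (by decide : ¬ Odd 2) hpodd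
  obtain ⟨j, hj⟩ := hn
  subst hj
  have hmain := main_int p hp2 j
  have hn1 : 2 * j + 1 - 1 = 2 * j := by omega
  rw [hn1]
  refine Nat.cast_inj (R := ℤ) |>.mp ?_
  rw [Nat.cast_mul, Nat.cast_prod]
  have hcast : ∀ k ∈ Finset.Icc 1 (2 * j),
      ((p ^ k - if Even k then 1 else 0 : ℕ) : ℤ)
        = (p : ℤ) ^ k - if Even k then 1 else 0 := by
    intro k _
    have hle : (if Even k then 1 else 0) ≤ p ^ k := by
      split
      · exact Nat.one_le_pow _ _ hp.pos
      · exact Nat.zero_le _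
    rw [Nat.cast_sub hle]
    push_cast
    split <;> simp
  rw [Finset.prod_congr rfl hcast]
  exact_mod_cast hmain
end

section
/- Let p be an odd prime and n an even positive integer. Then the order of O(n, ℤ/p) = {A : Aᵀ A = I} over the field with p elements equals 2 p^{n/2 - 1} (p^{n/2} - χ(p)^{n/2}) · ∏_{k=1}^{n-2} (p^k - ε₂(k)), where χ(p) = (-1/p) is the Legendre symbol of -1 mod p and ε₂(k) = 1 if k is even, 0 otherwise. -/
set_option linter.unusedSectionVars false
set_option maxHeartbeats 1000000

open Finset Matrix

variable {F : Type*} [Field F] [Fintype F] [DecidableEq F]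

lemma jsum (hF : ringChar F ≠ 2) (c : F) :
    ∑ t : F, quadraticChar F (t * (c - t)) =
      if c = 0 then (Fintype.card F - 1) * quadraticChar F (-1) else -(quadraticChar F (-1)) := by
  by_cases hc : c = 0
  · subst hc
    simp only [if_true, zero_sub, mul_neg]
    rw [← Finset.sum_erase_add _ _ (Finset.mem_univ (0:F))]
    simp only [mul_zero, neg_zero, MulChar.map_zero, add_zero]
    have : ∀ t ∈ Finset.univ.erase (0:F), quadraticChar F (-(t*t)) = quadraticChar F (-1) := by
      intro t ht
      have ht0 : t ≠ 0 := Finset.ne_of_mem_erase ht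
      have : -(t*t) = (-1) * t^2 := by ring
      rw [this, _root_.map_mul, _root_.map_pow]
      rw [quadraticChar_sq_one ht0, mul_one]
    rw [Finset.sum_congr rfl this, Finset.sum_const]
    rw [Finset.card_erase_of_mem (Finset.mem_univ _), Finset.card_univ]
    have hc1 : 1 ≤ Fintype.card F := Fintype.card_pos
    rw [nsmul_eq_mul]
    push_cast [hc1]
    ring
  · rw [if_neg hc]
    rw [← Finset.sum_erase_add _ _ (Finset.mem_univ (0:F))]
    simp only [zero_mul, MulChar.map_zero, add_zero]
    have key : ∀ t ∈ Finset.univ.erase (0:F),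
        quadraticChar F (t * (c - t)) = quadraticChar F (c * t⁻¹ - 1) := by
      intro t ht
      have ht0 : t ≠ 0 := Finset.ne_of_mem_erase ht
      have : t * (c - t) = t^2 * (c * t⁻¹ - 1) := by
        field_simp
      rw [this, _root_.map_mul, _root_.map_pow, quadraticChar_sq_one ht0, one_mul]
    rw [Finset.sum_congr rfl key]
    have hbij : ∑ t ∈ Finset.univ.erase (0:F), quadraticChar F (c * t⁻¹ - 1)
        = ∑ s ∈ Finset.univ.erase (-1:F), quadraticChar F s := by
      apply Finset.sum_nbij' (fun t => c * t⁻¹ - 1) (fun s => c * (s+1)⁻¹)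
      · intro t ht
        have ht0 : t ≠ 0 := Finset.ne_of_mem_erase ht
        simp only [Finset.mem_erase, Finset.mem_univ, and_true]
        intro h
        rw [sub_eq_neg_self] at h
        exact ht0 (by
          have := mul_eq_zero.mp h
          rcases this with h1 | h1
          · exact absurd h1 hc
          · exact inv_eq_zero.mp h1)
      · intro s hs
        have hs1 : s ≠ -1 := Finset.ne_of_mem_erase hs
        have : s + 1 ≠ 0 := by intro h; exact hs1 (by linear_combination h)
        simp only [Finset.mem_erase, Finset.mem_univ, and_true]
        exact mul_ne_zero hc (inv_ne_zero this)
      · intro t ht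
        have ht0 : t ≠ 0 := Finset.ne_of_mem_erase ht
        field_simp
        rw [sub_add_cancel, div_self hc]
      · intro s hs
        have hs1 : s ≠ -1 := Finset.ne_of_mem_erase hs
        have h1 : s + 1 ≠ 0 := by intro h; exact hs1 (by linear_combination h)
        field_simp
        ring
      · intro t ht; rfl
    rw [hbij]
    have := quadraticChar_sum_zero hF
    rw [← Finset.sum_erase_add _ _ (Finset.mem_univ (-1:F))] at this
    linarith [this]


lemma card_sq_fiber (hF : ringChar F ≠ 2) (d : F) :
    ((Finset.univ.filter (fun x : F => x ^ 2 = d)).card : ℤ) = quadraticChar F d + 1 := by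
  have := quadraticChar_card_sqrts hF d
  rw [← this]
  congr 1
  rw [Set.toFinset_setOf]

lemma sum_char_shift (hF : ringChar F ≠ 2) (c : F) :
    ∑ t : F, quadraticChar F (c - t) = 0 := by
  rw [← quadraticChar_sum_zero hF]
  exact Finset.sum_nbij' (fun t => c - t) (fun s => c - s) (by simp) (by simp)
    (by intro t _; ring) (by intro s _; ring) (by intro t _; rfl)

lemma sum_comp_sq (f : F → ℤ) :
    ∑ a : F, f (a ^ 2) = ∑ t : F, ((Finset.univ.filter (fun a : F => a ^ 2 = t)).card : ℤ) * f t := by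
  rw [Finset.sum_comp f (fun a : F => a ^ 2)]
  rw [← Finset.sum_subset (Finset.subset_univ (Finset.univ.image (fun a : F => a ^ 2)))]
  · apply Finset.sum_congr rfl
    intro t _
    rw [nsmul_eq_mul]
  · intro t _ ht
    have : (Finset.univ.filter (fun a : F => a ^ 2 = t)).card = 0 := by
      rw [Finset.card_eq_zero]
      ext a
      simp only [Finset.mem_filter, Finset.mem_univ, true_and, Finset.notMem_empty, iff_false]
      intro h
      exact ht (Finset.mem_image.mpr ⟨a, Finset.mem_univ a, h⟩)
    simp [this]

lemma card_pair_sq (hF : ringChar F ≠ 2) (c : F) :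
    (Fintype.card {ab : F × F // ab.1 ^ 2 + ab.2 ^ 2 = c} : ℤ)
      = if c = 0 then Fintype.card F + (Fintype.card F - 1) * quadraticChar F (-1)
        else Fintype.card F - quadraticChar F (-1) := by
  have e : {ab : F × F // ab.1 ^ 2 + ab.2 ^ 2 = c} ≃ Σ a : F, {b : F // b ^ 2 = c - a ^ 2} :=
    { toFun := fun x => ⟨x.1.1, x.1.2, by linear_combination x.2⟩
      invFun := fun x => ⟨(x.1, x.2.1), by linear_combination x.2.2⟩
      left_inv := fun x => rfl
      right_inv := fun x => rfl }
  rw [Fintype.card_congr e, Fintype.card_sigma]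
  push_cast
  have step1 : ∀ a : F, (Fintype.card {b : F // b ^ 2 = c - a ^ 2} : ℤ)
      = quadraticChar F (c - a ^ 2) + 1 := by
    intro a
    rw [Fintype.card_subtype, card_sq_fiber hF]
  rw [Finset.sum_congr rfl (fun a _ => step1 a)]
  rw [Finset.sum_add_distrib, Finset.sum_const, Finset.card_univ, nsmul_eq_mul, mul_one]
  have step2 : ∑ a : F, quadraticChar F (c - a ^ 2)
      = ∑ t : F, ((Finset.univ.filter (fun a : F => a ^ 2 = t)).card : ℤ) * quadraticChar F (c - t) :=
    sum_comp_sq (fun t => quadraticChar F (c - t))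
  rw [step2]
  have step3 : ∑ t : F, ((Finset.univ.filter (fun a : F => a ^ 2 = t)).card : ℤ) * quadraticChar F (c - t)
      = ∑ t : F, (quadraticChar F t * quadraticChar F (c - t) + quadraticChar F (c - t)) := by
    apply Finset.sum_congr rfl
    intro t _
    rw [card_sq_fiber hF]
    ring
  rw [step3, Finset.sum_add_distrib, sum_char_shift hF, add_zero]
  have step4 : ∑ t : F, quadraticChar F t * quadraticChar F (c - t)
      = ∑ t : F, quadraticChar F (t * (c - t)) := by
    apply Finset.sum_congr rfl
    intro t _
    rw [_root_.map_mul]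
  rw [step4, jsum hF c]
  by_cases hc : c = 0 <;> simp [hc] <;> push_cast [Nat.one_le_iff_ne_zero.mpr Fintype.card_ne_zero] <;> ring

def dp {n : ℕ} (x y : Fin n → F) : F := ∑ i, x i * y i

lemma dp_comm {n : ℕ} (x y : Fin n → F) : dp x y = dp y x := by
  simp [dp, mul_comm]

lemma dp_sub_left {n : ℕ} (x z y : Fin n → F) : dp (x - z) y = dp x y - dp z y := by
  simp [dp, sub_mul, Finset.sum_sub_distrib]

lemma dp_smul_left {n : ℕ} (c : F) (x y : Fin n → F) : dp (c • x) y = c * dp x y := by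
  simp [dp, Finset.mul_sum, mul_assoc]

lemma dp_neg_left {n : ℕ} (x y : Fin n → F) : dp (-x) y = -dp x y := by
  simp [dp, Finset.sum_neg_distrib]

lemma dp_neg_neg {n : ℕ} (x y : Fin n → F) : dp (-x) (-y) = dp x y := by
  simp [dp]

lemma dp_add_left {n : ℕ} (x z y : Fin n → F) : dp (x + z) y = dp x y + dp z y := by
  simp [dp, add_mul, Finset.sum_add_distrib]

lemma dp_add_right {n : ℕ} (x y z : Fin n → F) : dp x (y + z) = dp x y + dp x z := by
  rw [dp_comm, dp_add_left, dp_comm y x, dp_comm z x]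

lemma dp_sub_right {n : ℕ} (x y z : Fin n → F) : dp x (y - z) = dp x y - dp x z := by
  rw [dp_comm, dp_sub_left, dp_comm y x, dp_comm z x]

lemma dp_smul_right {n : ℕ} (c : F) (x y : Fin n → F) : dp x (c • y) = c * dp x y := by
  rw [dp_comm, dp_smul_left, dp_comm y x]

/-- reflection in w -/
def rf {n : ℕ} (w x : Fin n → F) : Fin n → F := x - (2 * dp x w / dp w w) • w

lemma dp_rf_self {n : ℕ} {w : Fin n → F} (hw : dp w w ≠ 0) (x : Fin n → F) :
    dp (rf w x) w = -dp x w := by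
  rw [rf, dp_sub_left, dp_smul_left]
  field_simp
  ring

lemma rf_isometry {n : ℕ} {w : Fin n → F} (hw : dp w w ≠ 0) (x y : Fin n → F) :
    dp (rf w x) (rf w y) = dp x y := by
  rw [rf, rf, dp_sub_left, dp_smul_left, dp_sub_right, dp_sub_right, dp_smul_right,
    dp_smul_right, dp_comm w y]
  field_simp
  ring

lemma rf_involutive {n : ℕ} {w : Fin n → F} (hw : dp w w ≠ 0) :
    Function.Involutive (rf w (n := n)) := by
  intro x
  have h1 := dp_rf_self hw x
  rw [rf, h1]
  rw [show rf w x = x - (2 * dp x w / dp w w) • w from rfl]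
  rw [mul_neg, neg_div, neg_smul, sub_neg_eq_add, sub_add_cancel]

lemma rf_neg {n : ℕ} (w x : Fin n → F) : rf w (-x) = -(rf w x) := by
  funext i
  simp only [rf, dp_neg_left, Pi.sub_apply, Pi.neg_apply, Pi.smul_apply, smul_eq_mul]
  ring

lemma exists_isometry {n : ℕ} (h2 : (2 : F) ≠ 0) (e u : Fin n → F)
    (he : dp e e = 1) (hu : dp u u = 1) :
    ∃ ι : (Fin n → F) → (Fin n → F), Function.Involutive ι ∧
      (∀ x y, dp (ι x) (ι y) = dp x y) ∧ ι e = u := by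
  have hc : dp u e = dp e u := dp_comm u e
  by_cases h : dp (u - e) (u - e) = 0
  · -- use -(rf (u+e))
    have hB : dp e u = 1 := by
      rw [dp_sub_left, dp_sub_right, dp_sub_right, hu, he, hc] at h
      have : 2 * (1 - dp e u) = 0 := by linear_combination h
      rcases mul_eq_zero.mp this with h' | h'
      · exact absurd h' h2
      · linear_combination -h'
    have hw : dp (u + e) (u + e) = 4 := by
      rw [dp_add_left, dp_add_right, dp_add_right, hu, he, hc, hB]
      ring
    have hw0 : dp (u + e) (u + e) ≠ 0 := by
      rw [hw]
      intro h4
      have h22 : (2:F) * 2 = 0 := by rw [← h4]; norm_num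
      rcases mul_eq_zero.mp h22 with h' | h' <;> exact h2 h'
    refine ⟨fun x => -(rf (u + e) x), ?_, ?_, ?_⟩
    · intro x
      show -(rf (u + e) (-(rf (u + e) x))) = x
      rw [rf_neg, neg_neg, rf_involutive hw0]
    · intro x y
      show dp (-(rf (u+e) x)) (-(rf (u+e) y)) = dp x y
      rw [dp_neg_neg, rf_isometry hw0]
    · show -(rf (u + e) e) = u
      rw [rf]
      have hde : dp e (u + e) = 2 := by
        rw [dp_add_right, he, hB]
        ring
      rw [hde, hw]
      have h40 : (4 : F) ≠ 0 := hw ▸ hw0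
      have h24 : (2 : F) * 2 / 4 = 1 := by
        rw [div_eq_one_iff_eq h40]
        norm_num
      rw [h24, one_smul]
      module
  · -- use rf (u - e)
    refine ⟨rf (u - e), rf_involutive h, fun x y => rf_isometry h x y, ?_⟩
    rw [rf]
    have hde : dp e (u - e) = dp e u - 1 := by
      rw [dp_sub_right, he]
    have hww : dp (u - e) (u - e) = 2 - 2 * dp e u := by
      rw [dp_sub_left, dp_sub_right, dp_sub_right, hu, he, hc]
      ring
    rw [hde, hww]
    have hne : dp e u - 1 ≠ 0 := by
      intro h0
      apply h
      rw [hww]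
      linear_combination -2 * h0
    have hden : 2 - 2 * dp e u ≠ 0 := hww ▸ h
    have : 2 * (dp e u - 1) / (2 - 2 * dp e u) = -1 := by
      rw [div_eq_iff hden]
      ring
    rw [this, neg_one_smul, sub_neg_eq_add]
    module

-- standard basis vector
def e0 {n : ℕ} : Fin (n + 1) → F := Fin.cons 1 0

lemma dp_e0 {n : ℕ} (x : Fin (n + 1) → F) : dp x (e0 (F := F)) = x 0 := by
  simp [dp, e0, Fin.sum_univ_succ]

lemma he0 {n : ℕ} : dp (e0 (F := F) (n := n)) e0 = 1 := by
  rw [dp_e0]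
  simp [e0]

lemma dp_succ {n : ℕ} (x y : Fin (n + 1) → F) :
    dp x y = x 0 * y 0 + dp (x ∘ Fin.succ) (y ∘ Fin.succ) := by
  simp [dp, Fin.sum_univ_succ, Function.comp]

lemma card_step (h2 : (2 : F) ≠ 0) (n k : ℕ) :
    Fintype.card {v : Fin (k+1) → (Fin (n+1) → F) //
        ∀ i j, dp (v i) (v j) = if i = j then 1 else 0}
      = Fintype.card {x : Fin (n+1) → F // ∑ i, x i ^ 2 = 1}
        * Fintype.card {v : Fin k → (Fin n → F) //
            ∀ i j, dp (v i) (v j) = if i = j then 1 else 0} := by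
  -- the fiber type over a unit vector u
  let Fib : (Fin (n+1) → F) → Type _ := fun u =>
    {v : Fin k → (Fin (n+1) → F) //
      (∀ i j, dp (v i) (v j) = if i = j then 1 else 0) ∧ ∀ i, dp (v i) u = 0}
  have E1 : {v : Fin (k+1) → (Fin (n+1) → F) //
      ∀ i j, dp (v i) (v j) = if i = j then 1 else 0}
      ≃ Σ u : {u : Fin (n+1) → F // dp u u = 1}, Fib u.1 :=
    { toFun := fun x => ⟨⟨x.1 0, by simpa using x.2 0 0⟩, ⟨fun i => x.1 i.succ,
        ⟨fun i j => by simpa [Fin.succ_inj] using x.2 i.succ j.succ,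
         fun i => by simpa [Fin.succ_ne_zero] using x.2 i.succ 0⟩⟩⟩
      invFun := fun y => ⟨Fin.cons y.1.1 y.2.1, by
        intro i j
        refine Fin.cases ?_ (fun i' => ?_) i
        · refine Fin.cases ?_ (fun j' => ?_) j
          · simpa using y.1.2
          · rw [Fin.cons_zero, Fin.cons_succ, if_neg (Ne.symm (Fin.succ_ne_zero j')), dp_comm]
            exact y.2.2.2 j'
        · refine Fin.cases ?_ (fun j' => ?_) j
          · rw [Fin.cons_succ, Fin.cons_zero, if_neg (Fin.succ_ne_zero i')]
            exact y.2.2.2 i'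
          · rw [Fin.cons_succ, Fin.cons_succ, y.2.2.1 i' j']
            by_cases hij : i' = j' <;> simp [hij, Fin.succ_inj]⟩
      left_inv := fun x => by
        apply Subtype.ext
        funext i
        refine Fin.cases ?_ (fun i' => ?_) i <;> simp
      right_inv := fun y => by
        refine Sigma.subtype_ext (Subtype.ext ?_) ?_
        · simp
        · funext i; simp }
  have key : ∀ u : {u : Fin (n+1) → F // dp u u = 1},
      Fintype.card (Fib u.1) = Fintype.card (Fib (e0 (F := F))) := by
    intro u
    obtain ⟨ι, hinv, hiso, hιe⟩ := exists_isometry h2 e0 u.1 he0 u.2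
    have hιu : ι u.1 = e0 := by
      have h := hinv (e0 (F := F))
      rwa [hιe] at h
    exact Fintype.card_congr
      { toFun := fun v => ⟨fun i => ι (v.1 i),
          ⟨fun i j => by rw [hiso]; exact v.2.1 i j,
           fun i => by rw [← hιu, hiso]; exact v.2.2 i⟩⟩
        invFun := fun w => ⟨fun i => ι (w.1 i),
          ⟨fun i j => by rw [hiso]; exact w.2.1 i j,
           fun i => by rw [← hιe, hiso]; exact w.2.2 i⟩⟩
        left_inv := fun v => by
          apply Subtype.ext; funext i; exact hinv (v.1 i)
        right_inv := fun w => by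
          apply Subtype.ext; funext i; exact hinv (w.1 i) }
  have E3 : Fib (e0 (F := F)) ≃ {v : Fin k → (Fin n → F) //
      ∀ i j, dp (v i) (v j) = if i = j then 1 else 0} :=
    { toFun := fun v => ⟨fun i => (v.1 i) ∘ Fin.succ, fun i j => by
        have h0i : v.1 i 0 = 0 := by
          have h := v.2.2 i
          rwa [dp_e0] at h
        have h := v.2.1 i j
        rw [dp_succ, h0i, zero_mul, zero_add] at h
        exact h⟩
      invFun := fun w => ⟨fun i => Fin.cons 0 (w.1 i),
        ⟨fun i j => by
          rw [dp_succ]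
          simp only [Fin.cons_zero, zero_mul, zero_add]
          have hc : ∀ z : Fin n → F, (Fin.cons (0:F) z) ∘ Fin.succ = z := by
            intro z; funext a; simp
          rw [hc, hc]
          exact w.2 i j,
         fun i => by rw [dp_e0]; simp⟩⟩
      left_inv := fun v => by
        apply Subtype.ext
        funext i
        have h0i : v.1 i 0 = 0 := by
          have h := v.2.2 i
          rwa [dp_e0] at h
        funext a
        refine Fin.cases ?_ (fun a' => ?_) a
        · simpa using h0i.symm
        · simp
      right_inv := fun w => by
        apply Subtype.ext
        funext i
        funext a
        simp }
  rw [Fintype.card_congr E1, Fintype.card_sigma]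
  rw [Finset.sum_congr rfl (fun u _ => key u), Finset.sum_const, Finset.card_univ, smul_eq_mul]
  congr 1
  · exact Fintype.card_congr (Equiv.subtypeEquivRight (fun x => by simp [dp, sq]))
  · exact Fintype.card_congr E3

lemma card_OT_diag (h2 : (2 : F) ≠ 0) (n : ℕ) :
    Fintype.card {v : Fin n → (Fin n → F) //
        ∀ i j, dp (v i) (v j) = if i = j then 1 else 0}
      = ∏ j ∈ Finset.range n,
          Fintype.card {x : Fin (j+1) → F // ∑ i, x i ^ 2 = 1} := by
  induction n with
  | zero =>
    rw [Finset.range_zero, Finset.prod_empty]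
    exact Fintype.card_eq_one_iff.mpr
      ⟨⟨fun i => i.elim0, fun i => i.elim0⟩, fun y => Subtype.ext (funext fun i => i.elim0)⟩
  | succ n ih =>
    rw [card_step h2, ih, Finset.prod_range_succ]
    ring

def sphEquiv (m : ℕ) : {x : Fin (m + 2) → F // ∑ i, x i ^ 2 = 1} ≃
    Σ v : Fin m → F, {ab : F × F // ab.1 ^ 2 + ab.2 ^ 2 = 1 - ∑ i, v i ^ 2} where
  toFun x := ⟨fun i => x.1 i.succ.succ, ⟨(x.1 0, x.1 (Fin.succ 0)), by
    have h := x.2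
    rw [Fin.sum_univ_succ, Fin.sum_univ_succ] at h
    linear_combination h⟩⟩
  invFun y := ⟨Fin.cons y.2.1.1 (Fin.cons y.2.1.2 y.1), by
    rw [Fin.sum_univ_succ, Fin.sum_univ_succ]
    simp only [Fin.cons_zero, Fin.cons_succ]
    linear_combination y.2.2⟩
  left_inv x := by
    apply Subtype.ext
    funext i
    refine Fin.cases ?_ (fun j => ?_) i
    · simp
    · refine Fin.cases ?_ (fun k => ?_) j <;> simp
  right_inv := fun ⟨v, ⟨(a, b), h⟩⟩ => by
    refine Sigma.subtype_ext ?_ ?_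
    · funext i; simp
    · simp

lemma card_sphere_rec (hF : ringChar F ≠ 2) (m : ℕ) :
    (Fintype.card {x : Fin (m + 2) → F // ∑ i, x i ^ 2 = 1} : ℤ) =
      ((Fintype.card F : ℤ) - quadraticChar F (-1)) * (Fintype.card F : ℤ) ^ m
        + quadraticChar F (-1) * (Fintype.card F)
          * Fintype.card {x : Fin m → F // ∑ i, x i ^ 2 = 1} := by
  rw [Fintype.card_congr (sphEquiv m), Fintype.card_sigma]
  push_cast
  have step : ∀ v : Fin m → F,
      (Fintype.card {ab : F × F // ab.1 ^ 2 + ab.2 ^ 2 = 1 - ∑ i, v i ^ 2} : ℤ)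
        = if (∑ i, v i ^ 2 = 1) then Fintype.card F + (Fintype.card F - 1) * quadraticChar F (-1)
          else Fintype.card F - quadraticChar F (-1) := by
    intro v
    rw [card_pair_sq hF]
    by_cases hq : ∑ i, v i ^ 2 = 1
    · rw [if_pos hq, if_pos (by rw [hq]; ring)]
    · rw [if_neg hq, if_neg (fun h => hq (by linear_combination -h))]
  rw [Finset.sum_congr rfl (fun v _ => step v)]
  rw [Finset.sum_ite, Finset.sum_const, Finset.sum_const]
  have h1 : (Finset.univ.filter (fun v : Fin m → F => ∑ i, v i ^ 2 = 1)).card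
      = Fintype.card {x : Fin m → F // ∑ i, x i ^ 2 = 1} := by
    rw [Fintype.card_subtype]
  have h2 : (Finset.univ.filter (fun v : Fin m → F => ¬(∑ i, v i ^ 2 = 1))).card
      = Fintype.card F ^ m - Fintype.card {x : Fin m → F // ∑ i, x i ^ 2 = 1} := by
    rw [Fintype.card_subtype, Finset.filter_not, Finset.card_sdiff_of_subset (Finset.filter_subset _ _),
      Finset.card_univ, Fintype.card_fun, Fintype.card_fin]
  rw [h1, h2]
  have hle : Fintype.card {x : Fin m → F // ∑ i, x i ^ 2 = 1} ≤ Fintype.card F ^ m := by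
    have := Fintype.card_subtype_le (fun x : Fin m → F => ∑ i, x i ^ 2 = 1)
    rwa [Fintype.card_fun, Fintype.card_fin] at this
  rw [nsmul_eq_mul, nsmul_eq_mul]
  push_cast [hle]
  ring

lemma card_sphere_one (hF : ringChar F ≠ 2) :
    (Fintype.card {x : Fin 1 → F // ∑ i, x i ^ 2 = 1} : ℤ) = 2 := by
  have e : {x : Fin 1 → F // ∑ i, x i ^ 2 = 1} ≃ {a : F // a ^ 2 = 1} :=
    { toFun := fun x => ⟨x.1 0, by have := x.2; rwa [Fin.sum_univ_one] at this⟩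
      invFun := fun a => ⟨fun _ => a.1, by rw [Fin.sum_univ_one]; exact a.2⟩
      left_inv := fun x => by
        apply Subtype.ext; funext i
        have : i = 0 := Subsingleton.elim _ _
        rw [this]
      right_inv := fun a => rfl }
  rw [Fintype.card_congr e, Fintype.card_subtype, card_sq_fiber hF, _root_.map_one]
  norm_num

lemma card_sphere_two (hF : ringChar F ≠ 2) :
    (Fintype.card {x : Fin 2 → F // ∑ i, x i ^ 2 = 1} : ℤ)
      = Fintype.card F - quadraticChar F (-1) := by
  have e : {x : Fin 2 → F // ∑ i, x i ^ 2 = 1} ≃ {ab : F × F // ab.1 ^ 2 + ab.2 ^ 2 = 1} :=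
    { toFun := fun x => ⟨(x.1 0, x.1 1), by have := x.2; rwa [Fin.sum_univ_two] at this⟩
      invFun := fun y => ⟨![y.1.1, y.1.2], by rw [Fin.sum_univ_two]; exact y.2⟩
      left_inv := fun x => by
        apply Subtype.ext; funext i
        fin_cases i <;> rfl
      right_inv := fun y => rfl }
  rw [Fintype.card_congr e, card_pair_sq hF, if_neg one_ne_zero]

lemma card_sphere_closed (hF : ringChar F ≠ 2) (k : ℕ) :
    (Fintype.card {x : Fin (2 * k + 1) → F // ∑ i, x i ^ 2 = 1} : ℤ)
        = (Fintype.card F : ℤ) ^ (2 * k) + quadraticChar F (-1) ^ k * (Fintype.card F : ℤ) ^ k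
      ∧ (Fintype.card {x : Fin (2 * k + 2) → F // ∑ i, x i ^ 2 = 1} : ℤ)
        = (Fintype.card F : ℤ) ^ (2 * k + 1)
            - quadraticChar F (-1) ^ (k + 1) * (Fintype.card F : ℤ) ^ k := by
  induction k with
  | zero =>
    constructor
    · rw [show 2 * 0 + 1 = 1 from rfl, card_sphere_one hF]
      norm_num
    · rw [show 2 * 0 + 2 = 2 from rfl, card_sphere_two hF]
      norm_num
  | succ k ih =>
    have h1 : 2 * (k + 1) + 1 = (2 * k + 1) + 2 := by ring
    have h2 : 2 * (k + 1) + 2 = (2 * k + 2) + 2 := by ring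
    constructor
    · rw [h1, card_sphere_rec hF, ih.1]
      ring
    · rw [h2, card_sphere_rec hF, ih.2]
      ring

lemma card_O_eq (n : ℕ) :
    Nat.card {A : Matrix (Fin n) (Fin n) F // Aᵀ * A = 1}
      = Fintype.card {v : Fin n → (Fin n → F) //
          ∀ i j, dp (v i) (v j) = if i = j then 1 else 0} := by
  rw [Nat.card_eq_fintype_card]
  apply Fintype.card_congr
  refine
    { toFun := fun A => ⟨fun j => fun k => A.1 k j, fun i j => ?_⟩
      invFun := fun v => ⟨Matrix.of (fun k j => v.1 j k), ?_⟩
      left_inv := fun A => rfl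
      right_inv := fun v => rfl }
  · have h : ((A.1)ᵀ * A.1) i j = (1 : Matrix (Fin n) (Fin n) F) i j := by rw [A.2]
    rw [Matrix.mul_apply, Matrix.one_apply] at h
    simpa [dp, Matrix.transpose_apply] using h
  · ext i j
    rw [Matrix.mul_apply, Matrix.one_apply]
    simpa [dp, Matrix.transpose_apply] using v.2 i j

lemma card_sphere_odd (hF : ringChar F ≠ 2) {m k : ℕ} (hm : m = 2 * k + 1) :
    (Fintype.card {x : Fin m → F // ∑ i, x i ^ 2 = 1} : ℤ)
      = (Fintype.card F : ℤ) ^ (2 * k) + quadraticChar F (-1) ^ k * (Fintype.card F : ℤ) ^ k := by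
  subst hm; exact (card_sphere_closed hF k).1

lemma card_sphere_even (hF : ringChar F ≠ 2) {m k : ℕ} (hm : m = 2 * k + 2) :
    (Fintype.card {x : Fin m → F // ∑ i, x i ^ 2 = 1} : ℤ)
      = (Fintype.card F : ℤ) ^ (2 * k + 1)
          - quadraticChar F (-1) ^ (k + 1) * (Fintype.card F : ℤ) ^ k := by
  subst hm; exact (card_sphere_closed hF k).2

lemma prod_spheres (hF : ringChar F ≠ 2) (t : ℕ) :
    ∏ j ∈ Finset.range (2*t+2), (Fintype.card {x : Fin (j+1) → F // ∑ i, x i ^ 2 = 1} : ℤ)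
      = 2 * (Fintype.card F : ℤ)^t
          * ((Fintype.card F : ℤ)^(t+1) - quadraticChar F (-1)^(t+1))
        * ∏ k ∈ Finset.Icc 1 (2*t), ((Fintype.card F : ℤ)^k - if Even k then 1 else 0) := by
  have hε2 : quadraticChar F (-1) ^ 2 = 1 :=
    quadraticChar_sq_one (neg_ne_zero.mpr one_ne_zero)
  induction t with
  | zero =>
    rw [show 2*0+2 = 2 from rfl, Finset.prod_range_succ, Finset.prod_range_succ,
      Finset.prod_range_zero, one_mul]
    rw [show (0:ℕ)+1 = 1 from rfl, show (1:ℕ)+1 = 2 from rfl, card_sphere_one hF,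
      card_sphere_two hF]
    rw [show 2*0 = 0 from rfl, Finset.Icc_eq_empty (by norm_num), Finset.prod_empty]
    ring
  | succ t ih =>
    rw [show 2*(t+1)+2 = (2*t+2)+1+1 by ring, Finset.prod_range_succ, Finset.prod_range_succ, ih]
    rw [card_sphere_odd hF (m := 2*t+2+1) (k := t+1) (by ring),
      card_sphere_even hF (m := 2*t+2+1+1) (k := t+1) (by ring)]
    have hodd : ¬ Even (2*t+1) := by simp [parity_simps]
    have heven : Even (2*t+1+1) := ⟨t+1, by ring⟩
    have hprod : ∏ k ∈ Finset.Icc 1 (2*(t+1)), ((Fintype.card F : ℤ)^k - if Even k then 1 else 0)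
        = (∏ k ∈ Finset.Icc 1 (2*t), ((Fintype.card F : ℤ)^k - if Even k then 1 else 0))
          * ((Fintype.card F : ℤ)^(2*t+1) - 0) * ((Fintype.card F : ℤ)^(2*t+1+1) - 1) := by
      rw [show 2*(t+1) = (2*t+1)+1 by ring,
        Finset.prod_Icc_succ_top (Nat.succ_le_succ (Nat.zero_le _) : 1 ≤ (2*t+1)+1),
        Finset.prod_Icc_succ_top (Nat.succ_le_succ (Nat.zero_le _) : 1 ≤ 2*t+1),
        if_neg hodd, if_pos heven]
    rw [hprod]
    have hA : quadraticChar F (-1) ^ (t+1) * quadraticChar F (-1) ^ (t+1) = 1 := by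
      rw [← pow_add, show t+1+(t+1) = 2*(t+1) by ring, pow_mul, hε2, one_pow]
    set q : ℤ := (Fintype.card F : ℤ)
    set e : ℤ := (quadraticChar F (-1) : ℤ)
    set P : ℤ := ∏ k ∈ Finset.Icc 1 (2*t), (q^k - if Even k then 1 else 0)
    linear_combination (-2 * P * q^(3*t+2) * (q^(t+2) - e^(t+2))) * hA

/-- For an odd prime `p` and even positive `n`,
`|O(n, ℤ/p)| = 2 p^{n/2-1}(p^{n/2} - (-1/p)^{n/2}) · ∏_{k=1}^{n-2} (p^k - ε₂(k))`,
where `(-1/p)` is the Legendre symbol. -/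
theorem stmt7 (p n : ℕ) [Fact p.Prime] (hpodd : Odd p) (hn : Even n) (h1 : 0 < n) :
    (Nat.card {A : Matrix (Fin n) (Fin n) (ZMod p) // Aᵀ * A = 1} : ℤ) =
      2 * (p : ℤ) ^ (n / 2 - 1) * ((p : ℤ) ^ (n / 2) - (legendreSym p (-1)) ^ (n / 2)) *
        ∏ k ∈ Finset.Icc 1 (n - 2), ((p : ℤ) ^ k - if Even k then 1 else 0) := by
  have hp2 : p ≠ 2 := by
    rintro rfl
    exact absurd hpodd (by decide)
  have hF : ringChar (ZMod p) ≠ 2 := by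
    rw [ZMod.ringChar_zmod_n]
    exact hp2
  have h2 : (2 : ZMod p) ≠ 0 := by
    intro h
    have : ((2:ℕ) : ZMod p) = 0 := by exact_mod_cast h
    have hd : p ∣ 2 := (ZMod.natCast_eq_zero_iff 2 p).mp this
    exact hp2 ((Nat.prime_dvd_prime_iff_eq Fact.out Nat.prime_two).mp hd)
  obtain ⟨r, hr⟩ := hn
  have hn2 : n = 2 * (r - 1) + 2 := by omega
  set t := r - 1
  subst hn2
  rw [card_O_eq, card_OT_diag h2]
  push_cast
  rw [prod_spheres hF t]
  have e1 : (2*t+2)/2 = t + 1 := by omega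
  have e2 : 2*t+2-2 = 2*t := by omega
  have hleg : (legendreSym p (-1) : ℤ) = quadraticChar (ZMod p) (-1) := by
    simp [legendreSym]
  rw [e1, show t+1-1 = t from rfl, hleg, ZMod.card]
end

section
/- For every odd positive integer n ≥ 3, ∏_{k=1}^{n} π^{-k/2} Γ(k/2) = ∏_{k=1}^{(n-1)/2} 2(2k-1)!/(2π)^{2k}. -/
open Real

lemma aux16 (m : ℕ) :
    ∏ k ∈ Finset.Icc 1 (2 * m + 1), π ^ (-(k : ℝ) / 2) * Real.Gamma ((k : ℝ) / 2) =
      ∏ k ∈ Finset.Icc 1 m, 2 * ((2 * k - 1).factorial : ℝ) / (2 * π) ^ (2 * k) := by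
  induction m with
  | zero =>
      simp only [Nat.mul_zero, Nat.zero_add, Finset.Icc_self, Finset.prod_singleton,
        Finset.Icc_eq_empty_of_lt (by norm_num : (1:ℕ) > 0), Finset.prod_empty]
      push_cast
      rw [show (-(1:ℝ)/2) = -(1/2) by ring, Real.rpow_neg pi_pos.le,
        Real.Gamma_one_half_eq, ← Real.sqrt_eq_rpow]
      field_simp
  | succ m ih =>
      have h1 : 2 * (m + 1) + 1 = (2 * m + 1) + 1 + 1 := by ring
      rw [h1, Finset.prod_Icc_succ_top (by omega), Finset.prod_Icc_succ_top (by omega), ih,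
        Finset.prod_Icc_succ_top (by omega : 1 ≤ m + 1), mul_assoc]
      congr 1
      -- the two new factors equal the new RHS factor
      have hc2 : ((2 * m + 1 + 1 : ℕ) : ℝ) = 2 * m + 2 := by push_cast; ring
      have hc3 : ((2 * m + 1 + 1 + 1 : ℕ) : ℝ) = 2 * m + 3 := by push_cast; ring
      rw [hc2, hc3]
      have e1 : (2 * (m:ℝ) + 2) / 2 = (m : ℝ) + 1 := by ring
      have e2 : (2 * (m:ℝ) + 3) / 2 = ((m : ℝ) + 1) + 1 / 2 := by ring
      have dup := Real.Gamma_mul_Gamma_add_half ((m : ℝ) + 1)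
      have hfac : Real.Gamma (2 * ((m:ℝ) + 1)) = ((2 * m + 1).factorial : ℝ) := by
        rw [show 2 * ((m:ℝ) + 1) = ((2 * m + 1 : ℕ) : ℝ) + 1 by push_cast; ring,
          Real.Gamma_nat_eq_factorial]
      have h2pow : (2 : ℝ) ^ (1 - 2 * ((m:ℝ) + 1)) = ((2 : ℝ) ^ (2 * m + 1 : ℕ))⁻¹ := by
        rw [show (1 - 2 * ((m:ℝ) + 1)) = -((2 * m + 1 : ℕ) : ℝ) by push_cast; ring,
          Real.rpow_neg (by norm_num), Real.rpow_natCast]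
      have hpi : π ^ (-(2 * (m:ℝ) + 2) / 2) * π ^ (-(2 * (m:ℝ) + 3) / 2)
          = (π ^ (2 * m + 2 : ℕ))⁻¹ * (√π)⁻¹ := by
        rw [← Real.rpow_add pi_pos,
          show (-(2 * (m:ℝ) + 2) / 2 + -(2 * (m:ℝ) + 3) / 2)
            = -((2 * m + 2 : ℕ) : ℝ) + -(1/2) by push_cast; ring,
          Real.rpow_add pi_pos, Real.rpow_neg pi_pos.le, Real.rpow_natCast,
          Real.rpow_neg pi_pos.le, ← Real.sqrt_eq_rpow]
      calc π ^ (-(2 * (m:ℝ) + 2) / 2) * Real.Gamma ((2 * (m:ℝ) + 2) / 2) *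
            (π ^ (-(2 * (m:ℝ) + 3) / 2) * Real.Gamma ((2 * (m:ℝ) + 3) / 2))
          = (π ^ (-(2 * (m:ℝ) + 2) / 2) * π ^ (-(2 * (m:ℝ) + 3) / 2)) *
            (Real.Gamma ((m:ℝ) + 1) * Real.Gamma (((m:ℝ) + 1) + 1/2)) := by
            rw [e1, e2]; ring
        _ = (π ^ (2 * m + 2 : ℕ))⁻¹ * (√π)⁻¹ *
            (((2 * m + 1).factorial : ℝ) * ((2 : ℝ) ^ (2 * m + 1 : ℕ))⁻¹ * √π) := by
            rw [hpi, dup, hfac, h2pow]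
        _ = 2 * ((2 * (m + 1) - 1).factorial : ℝ) / (2 * π) ^ (2 * (m + 1)) := by
            have hs : (√π) ≠ 0 := by positivity
            have hπ : π ≠ 0 := pi_ne_zero
            rw [show 2 * (m + 1) - 1 = 2 * m + 1 by omega]
            rw [mul_pow]
            field_simp
            ring

/-- For every odd integer `n ≥ 3`,
`∏_{k=1}^{n} π^{-k/2} Γ(k/2) = ∏_{k=1}^{(n-1)/2} 2(2k-1)!/(2π)^{2k}`. -/
theorem stmt16 (n : ℕ) (hn : Odd n) (h3 : 3 ≤ n) :
    ∏ k ∈ Finset.Icc 1 n, π ^ (-(k : ℝ) / 2) * Real.Gamma ((k : ℝ) / 2) =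
      ∏ k ∈ Finset.Icc 1 ((n - 1) / 2), 2 * ((2 * k - 1).factorial : ℝ) / (2 * π) ^ (2 * k) := by
  obtain ⟨m, rfl⟩ := hn
  rw [show (2 * m + 1 - 1) / 2 = m by omega]
  exact aux16 m
end
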